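/- arXiv:1711.05035 — 2 statements merged into one kernel-verified Lean document; each statement's English description precedes it below -/
import Mathlib

section
/- Let f : ℕ → ℕ be monotonically increasing and suppose that its Grundy function satisfies G_f(y,z) = y ⊕ z for all y, z ∈ ℕ with y ≤ f(z). Then for all y, z ∈ ℕ with y ≤ f(z), the set {G_f(min(y, f(w)), w) : w < z} equals the set {y ⊕ w : w < z}. -/
/-- The minimum excluded value of a set of natural numbers. -/
noncomputable def mex (S : Set ℕ) : ℕ := sInf {n | n ∉ S}

/-- The Grundy function of the chocolate bar game `CB(f,·,·)`:
`G_f(y,z) = mex({G_f(v,z) : v < y} ∪ {G_f(min(y, f w), w) : w < z})`. -/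
noncomputable def grundy (f : ℕ → ℕ) (y z : ℕ) : ℕ :=
  mex ({x | ∃ v, ∃ _ : v < y, x = grundy f v z} ∪
       {x | ∃ w, ∃ _ : w < z, x = grundy f (min y (f w)) w})
termination_by (z, y)

lemma mem_of_lt_mex {S : Set ℕ} {n : ℕ} (h : n < mex S) : n ∈ S := by
  by_contra hn
  exact absurd (Nat.sInf_le hn) (not_le.2 h)

lemma mex_not_mem {S : Set ℕ} (h : S.Finite) : mex S ∉ S := by
  have hne : {n | n ∉ S}.Nonempty := by
    have := h.infinite_compl
    exact this.nonempty
  exact Nat.sInf_mem hne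

lemma sets_finite (f : ℕ → ℕ) (y z : ℕ) :
    ({x | ∃ v, ∃ _ : v < y, x = grundy f v z} ∪
     {x | ∃ w, ∃ _ : w < z, x = grundy f (min y (f w)) w}).Finite := by
  apply Set.Finite.union
  · exact ((Set.finite_Iio y).image (fun v => grundy f v z)).subset
      (fun x ⟨v, hv, hx⟩ => ⟨v, hv, hx.symm⟩)
  · exact ((Set.finite_Iio z).image (fun w => grundy f (min y (f w)) w)).subset
      (fun x ⟨w, hw, hx⟩ => ⟨w, hw, hx.symm⟩)

theorem stmt_10 (f : ℕ → ℕ) (hmono : Monotone f)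
    (hG : ∀ y z : ℕ, y ≤ f z → grundy f y z = y ^^^ z)
    (y z : ℕ) (hyz : y ≤ f z) :
    {x | ∃ w < z, x = grundy f (min y (f w)) w} = {x | ∃ w < z, x = y ^^^ w} := by
  ext x
  simp only [Set.mem_setOf_eq]
  constructor
  · rintro ⟨w, hw, hx⟩
    refine ⟨y ^^^ x, ?_, by rw [xor_cancel_left]⟩
    by_contra hZ
    push_neg at hZ
    set Z := y ^^^ x with hZdef
    have hyZ : y ≤ f Z := hyz.trans (hmono hZ)
    have h1 : grundy f y Z = mex ({x | ∃ v, ∃ _ : v < y, x = grundy f v Z} ∪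
        {x | ∃ w, ∃ _ : w < Z, x = grundy f (min y (f w)) w}) := by rw [grundy]
    have h2 : x ∈ ({x | ∃ v, ∃ _ : v < y, x = grundy f v Z} ∪
        {x | ∃ w, ∃ _ : w < Z, x = grundy f (min y (f w)) w}) :=
      Or.inr ⟨w, hw.trans_le hZ, hx⟩
    have h3 : mex ({x | ∃ v, ∃ _ : v < y, x = grundy f v Z} ∪
        {x | ∃ w, ∃ _ : w < Z, x = grundy f (min y (f w)) w}) = x := by
      rw [← h1, hG y Z hyZ, hZdef, xor_cancel_left]
    exact mex_not_mem (sets_finite f y Z) (h3 ▸ h2)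
  · rintro ⟨w, hw, hx⟩
    set k := y + x + z + 1 with hk
    set Z := 2 ^ k with hZdef
    have hyk : y < Z := lt_of_lt_of_le (Nat.lt_two_pow_self (n := y)) (Nat.pow_le_pow_right (by norm_num) (by omega))
    have hxk : x < Z := lt_of_lt_of_le (Nat.lt_two_pow_self (n := x)) (Nat.pow_le_pow_right (by norm_num) (by omega))
    have hzk : z < Z := lt_of_lt_of_le (Nat.lt_two_pow_self (n := z)) (Nat.pow_le_pow_right (by norm_num) (by omega))
    have hyZ : y ≤ f Z := hyz.trans (hmono hzk.le)
    have h1 : grundy f y Z = mex ({x | ∃ v, ∃ _ : v < y, x = grundy f v Z} ∪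
        {x | ∃ w, ∃ _ : w < Z, x = grundy f (min y (f w)) w}) := by rw [grundy]
    have hmex : mex ({x | ∃ v, ∃ _ : v < y, x = grundy f v Z} ∪
        {x | ∃ w, ∃ _ : w < Z, x = grundy f (min y (f w)) w}) = y ^^^ Z := by
      rw [← h1, hG y Z hyZ]
    -- x < y ^^^ Z since bit k of y ^^^ Z is set
    have hbit : (y ^^^ Z).testBit k = true := by
      rw [Nat.testBit_xor, Nat.testBit_lt_two_pow hyk, hZdef, Nat.testBit_two_pow_self]
      rfl
    have hxlt : x < y ^^^ Z := lt_of_lt_of_le hxk (Nat.ge_two_pow_of_testBit hbit)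
    have hmem := mem_of_lt_mex (hmex ▸ hxlt)
    rcases hmem with ⟨v, hv, hxv⟩ | ⟨w', hw', hxw'⟩
    · -- x = grundy f v Z = v ^^^ Z ≥ 2^k > x, contradiction
      exfalso
      have : x = v ^^^ Z := by rw [hxv, hG v Z (le_of_lt (hv.trans_le hyZ))]
      have hb : x.testBit k = true := by
        rw [this, Nat.testBit_xor, Nat.testBit_lt_two_pow (hv.trans hyk), hZdef,
          Nat.testBit_two_pow_self]
        rfl
      exact absurd (Nat.ge_two_pow_of_testBit hb) (not_le.2 hxk)
    · refine ⟨w', ?_, hxw'⟩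
      by_contra hzw
      push_neg at hzw
      have hmin : min y (f w') = y := min_eq_left (hyz.trans (hmono hzw))
      rw [hmin, hG y w' (hyz.trans (hmono hzw))] at hxw'
      have : w' = w := by
        have := hx.symm.trans hxw'
        exact (Nat.xor_right_inj.mp this).symm
      omega
end

section
/- Let k ≥ 1 and s ≥ 1 be natural numbers, and define h_s : ℕ → ℕ by h_s(z) = ⌊(z+s)/(2k)⌋. Then there exist a non-negative integer v and a natural number m with 1 ≤ m ≤ 2k−1 such that s = m·2^v, if and only if the Grundy function of the chocolate bar game satisfies G_{h_s}(y,z) = (y ⊕ (z+s)) − s for all y, z ∈ ℕ with y ≤ h_s(z). -/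
private lemma m2 (x : ℕ) : x % 2 = (x.testBit 0).toNat := by
  rcases Nat.mod_two_eq_zero_or_one x with h | h <;> simp [Nat.testBit_zero, h]

private lemma xor_mod_two (a b : ℕ) : (a ^^^ b) % 2 = (a % 2) ^^^ (b % 2) := by
  rw [m2 (a ^^^ b), m2 a, m2 b, Nat.testBit_xor]
  cases a.testBit 0 <;> cases b.testBit 0 <;> rfl

private lemma xor_div_two (a b : ℕ) : (a ^^^ b) / 2 = a / 2 ^^^ b / 2 := by
  apply Nat.eq_of_testBit_eq
  intro i
  simp only [Nat.testBit_xor, ← Nat.testBit_succ]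

private lemma xor2 (a b i j : ℕ) (hi : i < 2) (hj : j < 2) :
    (2 * a + i) ^^^ (2 * b + j) = 2 * (a ^^^ b) + (i ^^^ j) := by
  have hd := xor_div_two (2 * a + i) (2 * b + j)
  have hm := xor_mod_two (2 * a + i) (2 * b + j)
  have h1 : (2 * a + i) / 2 = a := by omega
  have h2 : (2 * b + j) / 2 = b := by omega
  have h3 : (2 * a + i) % 2 = i := by omega
  have h4 : (2 * b + j) % 2 = j := by omega
  rw [h1, h2] at hd
  rw [h3, h4] at hm
  have h5 : i ^^^ j < 2 := by interval_cases i <;> interval_cases j <;> decide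
  omega

private lemma xor_le_add (a : ℕ) : ∀ b, a ^^^ b ≤ a + b := by
  induction a using Nat.strong_induction_on with
  | _ a IH =>
    intro b
    rcases Nat.eq_zero_or_pos a with rfl | ha
    · simp
    · have hd := xor_div_two a b
      have hm := xor_mod_two a b
      have hIH := IH (a / 2) (by omega) (b / 2)
      rcases Nat.mod_two_eq_zero_or_one a with h1 | h1 <;>
        rcases Nat.mod_two_eq_zero_or_one b with h2 | h2 <;>
        rw [h1, h2] at hm <;>
        first
          | (rw [show (0:ℕ) ^^^ 0 = 0 from rfl] at hm; omega)
          | (rw [show (0:ℕ) ^^^ 1 = 1 from rfl] at hm; omega)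
          | (rw [show (1:ℕ) ^^^ 0 = 1 from rfl] at hm; omega)
          | (rw [show (1:ℕ) ^^^ 1 = 0 from rfl] at hm; omega)

private lemma xor_lt_two_pow' {n : ℕ} : ∀ {a b : ℕ}, a < 2 ^ n → b < 2 ^ n → a ^^^ b < 2 ^ n := by
  induction n with
  | zero => intro a b ha hb; interval_cases a; interval_cases b; decide
  | succ n IH =>
    intro a b ha hb
    have h2 : (2:ℕ) ^ (n + 1) = 2 * 2 ^ n := by ring
    have hd := xor_div_two a b
    have hm := xor_mod_two a b
    have hIH := IH (a := a / 2) (b := b / 2) (by omega) (by omega)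
    have : a % 2 ^^^ b % 2 < 2 := by
      rcases Nat.mod_two_eq_zero_or_one a with h1 | h1 <;>
        rcases Nat.mod_two_eq_zero_or_one b with h2 | h2 <;> rw [h1, h2] <;> decide
    omega

private lemma exists_topdiff {t c : ℕ} (h : t < c) :
    ∃ b, t.testBit b = false ∧ c.testBit b = true ∧ ∀ j, b < j → t.testBit j = c.testBit j := by
  have hd : t ^^^ c ≠ 0 := by
    intro h0
    replace h0 : t = c := by simpa [Nat.xor_assoc] using congrArg (· ^^^ c) h0
    omega
  obtain ⟨i, hi, hij⟩ := Nat.exists_most_significant_bit hd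
  have hhigh : ∀ j, i < j → t.testBit j = c.testBit j := by
    intro j hj
    have := hij j hj
    rw [Nat.testBit_xor] at this
    cases h1 : t.testBit j <;> cases h2 : c.testBit j <;> simp [h1, h2] at this ⊢
  rw [Nat.testBit_xor] at hi
  cases h1 : t.testBit i
  · refine ⟨i, h1, ?_, hhigh⟩
    cases h2 : c.testBit i
    · rw [h1, h2] at hi; simp at hi
    · rfl
  · exfalso
    have h2 : c.testBit i = false := by
      cases h2 : c.testBit i
      · rfl
      · rw [h1, h2] at hi; simp at hi
    have := Nat.lt_of_testBit i h2 h1 (fun j hj => (hhigh j hj).symm)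
    omega

-- xor with 1
private lemma even_xor_one {q : ℕ} (h : q % 2 = 0) : q ^^^ 1 = q + 1 := by
  have h1 : q = 2 * (q / 2) + 0 := by omega
  have := xor2 (q / 2) 0 0 1 (by omega) (by omega)
  rw [← h1] at this
  norm_num at this
  omega

private lemma odd_xor_one {q : ℕ} (h : q % 2 = 1) : q ^^^ 1 = q - 1 := by
  have h1 : q = 2 * (q / 2) + 1 := by omega
  have := xor2 (q / 2) 0 1 1 (by omega) (by omega)
  rw [← h1] at this
  norm_num at this
  omega

private lemma xor_mul_pow (e a b : ℕ) : (2 ^ e * a) ^^^ (2 ^ e * b) = 2 ^ e * (a ^^^ b) := by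
  induction e generalizing a b with
  | zero => simp
  | succ e IH =>
    have hp : (2:ℕ) ^ (e + 1) = 2 * 2 ^ e := by ring
    have h1 : 2 ^ (e+1) * a = 2 * (2 ^ e * a) + 0 := by rw [hp]; ring
    have h2 : 2 ^ (e+1) * b = 2 * (2 ^ e * b) + 0 := by rw [hp]; ring
    rw [h1, h2, xor2 _ _ _ _ (by omega) (by omega), IH]
    rw [show (0:ℕ) ^^^ 0 = 0 from rfl, hp]
    ring

private lemma add_xor_of_lt : ∀ (e a r x : ℕ), r < 2 ^ e → x < 2 ^ e →
    (2 ^ e * a + r) ^^^ x = 2 ^ e * a + (r ^^^ x) := by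
  intro e
  induction e with
  | zero =>
    intro a r x hr hx
    interval_cases r
    interval_cases x
    simp
  | succ e IH =>
    intro a r x hr hx
    have hp : (2:ℕ) ^ (e + 1) = 2 * 2 ^ e := by ring
    have h1 : 2 ^ (e+1) * a + r = 2 * (2 ^ e * a + r / 2) + r % 2 := by
      rw [hp]
      have : 2 * 2 ^ e * a = 2 * (2 ^ e * a) := by ring
      omega
    have h2 : x = 2 * (x / 2) + x % 2 := by omega
    have h3 : r = 2 * (r / 2) + r % 2 := by omega
    have hIH := IH a (r / 2) (x / 2) (by omega) (by omega)
    have hx2 : r ^^^ x = 2 * (r / 2 ^^^ x / 2) + (r % 2 ^^^ x % 2) := by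
      conv_lhs => rw [h3, h2]
      exact xor2 _ _ _ _ (by omega) (by omega)
    have hbit : r % 2 ^^^ x % 2 < 2 := by
      rcases Nat.mod_two_eq_zero_or_one r with h | h <;>
        rcases Nat.mod_two_eq_zero_or_one x with h' | h' <;> rw [h, h'] <;> decide
    calc (2 ^ (e+1) * a + r) ^^^ x
        = (2 * (2 ^ e * a + r / 2) + r % 2) ^^^ (2 * (x / 2) + x % 2) := by rw [← h1, ← h2]
      _ = 2 * ((2 ^ e * a + r / 2) ^^^ x / 2) + (r % 2 ^^^ x % 2) := by
          exact xor2 _ _ _ _ (by omega) (by omega)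
      _ = 2 * (2 ^ e * a + (r / 2 ^^^ x / 2)) + (r % 2 ^^^ x % 2) := by rw [hIH]
      _ = 2 ^ (e+1) * a + (r ^^^ x) := by rw [hx2, hp]; ring_nf

/-- If `2k·a ≤ W < s` (with `s = m·2^v`, `m ≤ 2k-1`), then `a ^^^ W < s`. -/
private lemma lt_s {k s v m : ℕ} (hk : 1 ≤ k) (hm1 : 1 ≤ m) (hm2 : m ≤ 2 * k - 1)
    (hsmv : s = m * 2 ^ v) {a W : ℕ} (hreg : 2 * k * a ≤ W) (hW : W < s) : a ^^^ W < s := by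
  have hpv : (0:ℕ) < 2 ^ v := Nat.pow_pos (n := v) (by omega)
  have ha : a < 2 ^ v := by
    have h1 : m * 2 ^ v ≤ (2 * k - 1) * 2 ^ v := Nat.mul_le_mul_right _ hm2
    have h2 : (2 * k - 1) * 2 ^ v < 2 * k * 2 ^ v := by
      exact (Nat.mul_lt_mul_right hpv).mpr (by omega)
    have h3 : 2 * k * a < 2 * k * 2 ^ v := by omega
    exact Nat.lt_of_mul_lt_mul_left h3
  have hWd : W = 2 ^ v * (W / 2 ^ v) + W % 2 ^ v := (Nat.div_add_mod W (2 ^ v)).symm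
  have hxa : W ^^^ a = 2 ^ v * (W / 2 ^ v) + (W % 2 ^ v ^^^ a) := by
    conv_lhs => rw [hWd]
    exact add_xor_of_lt v (W / 2 ^ v) (W % 2 ^ v) a (Nat.mod_lt _ hpv) ha
  have hq : W / 2 ^ v < m := by
    rw [hsmv, Nat.mul_comm] at hW
    exact Nat.div_lt_of_lt_mul hW
  have hx2 : W % 2 ^ v ^^^ a < 2 ^ v := xor_lt_two_pow' (Nat.mod_lt _ hpv) ha
  have : W ^^^ a < 2 ^ v * (W / 2 ^ v + 1) := by
    rw [Nat.mul_add, Nat.mul_one]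
    omega
  have hfin : 2 ^ v * (W / 2 ^ v + 1) ≤ 2 ^ v * m := Nat.mul_le_mul_left _ (by omega)
  rw [Nat.xor_comm]
  rw [hsmv, Nat.mul_comm]
  omega

/-- Region positions have value ≥ s. -/
private lemma ge_s {k s v m : ℕ} (hk : 1 ≤ k) (hm1 : 1 ≤ m) (hm2 : m ≤ 2 * k - 1)
    (hsmv : s = m * 2 ^ v) {y Z : ℕ} (hZ : s ≤ Z) (hy : 2 * k * y ≤ Z) : s ≤ y ^^^ Z := by
  by_contra hlt
  push_neg at hlt
  have hpv : (0:ℕ) < 2 ^ v := Nat.pow_pos (n := v) (by omega)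
  have h1 : Z ≤ y + (y ^^^ Z) := by
    calc Z = y ^^^ (y ^^^ Z) := by rw [← Nat.xor_assoc, Nat.xor_self, Nat.zero_xor]
    _ ≤ y + (y ^^^ Z) := xor_le_add _ _
  have h2 : (2 * k - 1) * y + y = 2 * k * y := by
    have h3 : (2 * k - 1) + 1 = 2 * k := by omega
    calc (2 * k - 1) * y + y = ((2 * k - 1) + 1) * y := by ring
    _ = 2 * k * y := by rw [h3]
  have h4 : (2 * k - 1) * y < s := by omega
  have hy2 : y < 2 ^ v := by
    have h5 : s ≤ (2 * k - 1) * 2 ^ v := by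
      rw [hsmv]; exact Nat.mul_le_mul_right _ hm2
    have h6 : (2 * k - 1) * y < (2 * k - 1) * 2 ^ v := by omega
    exact Nat.lt_of_mul_lt_mul_left h6
  have hr : Z - s < 2 ^ v := by omega
  have hZd : Z = 2 ^ v * m + (Z - s) := by
    rw [← Nat.mul_comm m (2 ^ v), ← hsmv]; omega
  have : Z ^^^ y = 2 ^ v * m + ((Z - s) ^^^ y) := by
    conv_lhs => rw [hZd]
    exact add_xor_of_lt v m (Z - s) y hr hy2
  rw [Nat.xor_comm y Z] at hlt
  rw [hsmv, Nat.mul_comm] at hlt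
  omega

/-- Key distinctness lemma, proved by halving descent. -/
private lemma dist {k : ℕ} (hk : 1 ≤ k) : ∀ Z y q W, 2 * k * y ≤ Z → 2 * k * q ≤ W →
    W < 2 * k * q + 2 * k → q < y → W < Z → q ^^^ W = y ^^^ Z → False := by
  intro Z
  induction Z using Nat.strong_induction_on with
  | _ Z IH =>
    intro y q W h1 h2 h3 h4 h5 h6
    have hWZ : W ^^^ Z = y ^^^ q := by
      calc W ^^^ Z = (q ^^^ (q ^^^ W)) ^^^ Z := by rw [← Nat.xor_assoc, Nat.xor_self, Nat.zero_xor]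
      _ = (q ^^^ (y ^^^ Z)) ^^^ Z := by rw [h6]
      _ = y ^^^ q := by rw [Nat.xor_assoc, Nat.xor_assoc, Nat.xor_self, Nat.xor_zero,
            Nat.xor_comm q y]
    have hky : 2 * k * y = 2 * (k * y) := by ring
    by_cases hc1 : q / 2 = y / 2
    · -- collapse: y = q+1, q even
      have hq1 : y = q + 1 ∧ q % 2 = 0 := by omega
      have hyq : y ^^^ q = 1 := by
        rw [hq1.1, ← even_xor_one hq1.2, Nat.xor_comm q 1, Nat.xor_assoc, Nat.xor_self,
          Nat.xor_zero]
      rw [hyq] at hWZ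
      -- W ^^^ Z = 1, W < Z → Z = W+1, W even
      have hW2 : W % 2 = 0 := by
        rcases Nat.mod_two_eq_zero_or_one W with h | h
        · exact h
        · exfalso
          have : W ^^^ 1 = W - 1 := odd_xor_one h
          have hZW : Z = W - 1 := by
            calc Z = W ^^^ (W ^^^ Z) := by rw [← Nat.xor_assoc, Nat.xor_self, Nat.zero_xor]
            _ = W - 1 := by rw [hWZ]; exact this
          omega
      have hZW : Z = W + 1 := by
        have : W ^^^ 1 = W + 1 := even_xor_one hW2
        calc Z = W ^^^ (W ^^^ Z) := by rw [← Nat.xor_assoc, Nat.xor_self, Nat.zero_xor]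
        _ = W + 1 := by rw [hWZ]; exact this
      have : 2 * k * y = 2 * k * q + 2 * k := by rw [hq1.1]; ring
      omega
    · by_cases hc2 : W / 2 = Z / 2
      · -- collapse: Z = W+1, W even
        have hZW : Z = W + 1 ∧ W % 2 = 0 := by omega
        have hWZ1 : W ^^^ Z = 1 := by
          rw [hZW.1, ← even_xor_one hZW.2, ← Nat.xor_assoc, Nat.xor_self, Nat.zero_xor]
        rw [hWZ1] at hWZ
        have hq2 : q % 2 = 0 := by
          rcases Nat.mod_two_eq_zero_or_one q with h | h
          · exact h
          · exfalso
            have : q ^^^ 1 = q - 1 := odd_xor_one h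
            have : y = q - 1 := by
              calc y = q ^^^ (y ^^^ q) := by
                    rw [Nat.xor_comm y q, ← Nat.xor_assoc, Nat.xor_self, Nat.zero_xor]
              _ = q - 1 := by rw [← hWZ]; exact this
            omega
        have hyq1 : y = q + 1 := by
          have : q ^^^ 1 = q + 1 := even_xor_one hq2
          have : y = q + 1 := by
            calc y = q ^^^ (y ^^^ q) := by
                  rw [Nat.xor_comm y q, ← Nat.xor_assoc, Nat.xor_self, Nat.zero_xor]
            _ = q + 1 := by rw [← hWZ]; exact this
          exact this
        have : 2 * k * y = 2 * k * q + 2 * k := by rw [hyq1]; ring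
        omega
      · -- descent
        have hZpos : 1 ≤ Z := by omega
        apply IH (Z / 2) (by omega) (y / 2) (q / 2) (W / 2)
        · rw [Nat.le_div_iff_mul_le (by omega : 0 < 2)]
          have : 2 * k * (y / 2) * 2 = 2 * k * (2 * (y / 2)) := by ring
          rw [this]
          have h7 : 2 * (y / 2) ≤ y := by omega
          calc 2 * k * (2 * (y / 2)) ≤ 2 * k * y := Nat.mul_le_mul_left _ h7
          _ ≤ Z := h1
        · rw [Nat.le_div_iff_mul_le (by omega : 0 < 2)]
          have : 2 * k * (q / 2) * 2 = 2 * k * (2 * (q / 2)) := by ring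
          rw [this]
          have h7 : 2 * (q / 2) ≤ q := by omega
          calc 2 * k * (2 * (q / 2)) ≤ 2 * k * q := Nat.mul_le_mul_left _ h7
          _ ≤ W := h2
        · have h7 : q ≤ 2 * (q / 2) + 1 := by omega
          have h8 : 2 * k * q ≤ 2 * k * (2 * (q / 2) + 1) := Nat.mul_le_mul_left _ h7
          have h9 : 2 * k * (2 * (q / 2) + 1) + 2 * k = 2 * (2 * k * (q / 2) + 2 * k) := by ring
          have hW9 : W < 2 * (2 * k * (q / 2) + 2 * k) := by omega
          omega
        · have := Nat.div_le_div_right (c := 2) (Nat.le_of_lt h4)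
          omega
        · have := Nat.div_le_div_right (c := 2) (Nat.le_of_lt h5)
          omega
        · rw [← xor_div_two, ← xor_div_two, h6]

private lemma xor_div_pow (a b : ℕ) : ∀ n, (a ^^^ b) / 2 ^ n = a / 2 ^ n ^^^ b / 2 ^ n := by
  intro n
  induction n generalizing a b with
  | zero => simp
  | succ n IH =>
    have hp : (2:ℕ) ^ (n + 1) = 2 ^ n * 2 := by ring
    rw [hp, ← Nat.div_div_eq_div_mul, ← Nat.div_div_eq_div_mul, ← Nat.div_div_eq_div_mul,
      IH, xor_div_two]

/-- The key "step" lemma: `t ^^^ y < 2k·y → t ^^^ (y+1) < 2k·(y+1)`. -/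
private lemma step {k : ℕ} (hk : 1 ≤ k) (t y : ℕ) (h : t ^^^ y < 2 * k * y) :
    t ^^^ (y + 1) < 2 * k * (y + 1) := by
  rcases Nat.eq_zero_or_pos y with rfl | hy
  · simp at h
  by_cases hp : y % 2 = 0
  · -- y even : t ^^^ (y+1) = (t ^^^ y) ^^^ 1 ≤ t ^^^ y + 1
    have e1 : y + 1 = y ^^^ 1 := (even_xor_one hp).symm
    have e2 : t ^^^ (y + 1) = (t ^^^ y) ^^^ 1 := by rw [e1, Nat.xor_assoc]
    have e3 : (t ^^^ y) ^^^ 1 ≤ (t ^^^ y) + 1 := by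
      rcases Nat.mod_two_eq_zero_or_one (t ^^^ y) with h2 | h2
      · rw [even_xor_one h2]
      · rw [odd_xor_one h2]; omega
    have e4 : 2 * k * (y + 1) = 2 * k * y + 2 * k := by ring
    omega
  · -- y odd
    obtain ⟨r, o, ho, hyo⟩ := Nat.exists_eq_two_pow_mul_odd (n := y + 1) (by omega)
    obtain ⟨j, hj⟩ := ho
    set P := 2 ^ r with hP
    have hPpos : 0 < P := Nat.pow_pos (n := r) (by omega)
    have hy1 : y + 1 = 2 * P * j + P := by rw [hyo, hj]; ring
    have d1 : y / (2 * P) = j := by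
      have hyy : y = 2 * P * j + (P - 1) := by omega
      rw [hyy, Nat.mul_add_div (by omega)]
      rw [Nat.div_eq_of_lt (by omega)]
      omega
    have d2 : (y + 1) / (2 * P) = j := by
      rw [hy1, Nat.mul_add_div (by omega)]
      rw [Nat.div_eq_of_lt (by omega)]
      omega
    have hM : (2:ℕ) ^ (r + 1) = 2 * P := by rw [hP]; ring
    have hX : (t ^^^ (y + 1)) / (2 * P) = (t ^^^ y) / (2 * P) := by
      rw [← hM, xor_div_pow, xor_div_pow, hM, d1, d2]
    have hko : 2 * k * (y + 1) = 2 * P * (k * o) := by rw [hyo]; ring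
    have hXlt : (t ^^^ y) / (2 * P) < k * o := by
      rw [Nat.div_lt_iff_lt_mul (by omega)]
      have h4 : 2 * k * y < 2 * k * (y + 1) := by
        have : 2 * k * (y+1) = 2 * k * y + 2 * k := by ring
        omega
      calc t ^^^ y < 2 * k * (y + 1) := by omega
      _ = k * o * (2 * P) := by rw [hko]; ring
    have hmod := Nat.div_add_mod (t ^^^ (y + 1)) (2 * P)
    have hmlt : (t ^^^ (y + 1)) % (2 * P) < 2 * P := Nat.mod_lt _ (by omega)
    have hstep : (t ^^^ (y + 1)) / (2 * P) + 1 ≤ k * o := by omega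
    have : 2 * P * ((t ^^^ (y + 1)) / (2 * P) + 1) ≤ 2 * P * (k * o) :=
      Nat.mul_le_mul_left _ hstep
    have h5 : 2 * P * ((t ^^^ (y + 1)) / (2 * P) + 1)
        = 2 * P * ((t ^^^ (y + 1)) / (2 * P)) + 2 * P := by ring
    omega

private lemma chain {k : ℕ} (hk : 1 ≤ k) (t y : ℕ) (h : t ^^^ y < 2 * k * y) :
    ∀ q, y ≤ q → t ^^^ q < 2 * k * q := by
  intro q hq
  induction q, hq using Nat.le_induction with
  | base => exact h
  | succ n hn IH => exact step hk t n IH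

/-- ψ(W) = ⌊W/2k⌋ ^^^ W is surjective. -/
private lemma psi_surj {k : ℕ} (hk : 1 ≤ k) (t : ℕ) : ∃ W, W / (2 * k) ^^^ W = t := by
  classical
  set F : ℕ → ℕ := fun W => W / (2 * k) ^^^ W with hF
  have hinj : Function.Injective F := by
    intro W W' hWW
    by_contra hne
    rcases Nat.lt_or_ge W W' with hlt | hge
    · rcases Nat.lt_or_ge (W / (2*k)) (W' / (2*k)) with hq | hq
      · refine dist hk W' (W' / (2*k)) (W / (2*k)) W ?_ ?_ ?_ hq hlt hWW
        · calc 2 * k * (W' / (2*k)) = W' / (2*k) * (2*k) := by ring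
          _ ≤ W' := Nat.div_mul_le_self _ _
        · calc 2 * k * (W / (2*k)) = W / (2*k) * (2*k) := by ring
          _ ≤ W := Nat.div_mul_le_self _ _
        · have := Nat.div_add_mod W (2 * k)
          have : W % (2*k) < 2*k := Nat.mod_lt _ (by omega)
          omega
      · have hqe : W / (2*k) = W' / (2*k) :=
          Nat.le_antisymm (Nat.div_le_div_right (Nat.le_of_lt hlt)) hq
        have : W = W' := by
          have h2 := congrArg (fun x => W' / (2*k) ^^^ x) hWW
          simp only [hF, hqe] at h2
          simpa [← Nat.xor_assoc] using h2
        omega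
    · rcases Nat.eq_or_lt_of_le hge with heq | hlt
      · exact hne heq.symm
      · rcases Nat.lt_or_ge (W' / (2*k)) (W / (2*k)) with hq | hq
        · refine dist hk W (W / (2*k)) (W' / (2*k)) W' ?_ ?_ ?_ hq hlt hWW.symm
          · calc 2 * k * (W / (2*k)) = W / (2*k) * (2*k) := by ring
            _ ≤ W := Nat.div_mul_le_self _ _
          · calc 2 * k * (W' / (2*k)) = W' / (2*k) * (2*k) := by ring
            _ ≤ W' := Nat.div_mul_le_self _ _
          · have := Nat.div_add_mod W' (2 * k)
            have : W' % (2*k) < 2*k := Nat.mod_lt _ (by omega)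
            omega
        · have hqe : W / (2*k) = W' / (2*k) :=
            Nat.le_antisymm hq (Nat.div_le_div_right (Nat.le_of_lt hlt))
          have : W = W' := by
            have h2 := congrArg (fun x => W' / (2*k) ^^^ x) hWW
            simp only [hF, hqe] at h2
            simpa [← Nat.xor_assoc] using h2
          omega
  -- counting argument on range (2^t)
  have hmaps : ∀ W ∈ Finset.range (2 ^ t), F W ∈ Finset.range (2 ^ t) := by
    intro W hW
    rw [Finset.mem_range] at hW ⊢
    exact xor_lt_two_pow' (lt_of_le_of_lt (Nat.div_le_self _ _) hW) hW
  have himg : Finset.image F (Finset.range (2 ^ t)) = Finset.range (2 ^ t) := by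
    apply Finset.eq_of_subset_of_card_le
    · intro x hx
      rw [Finset.mem_image] at hx
      obtain ⟨W, hW, rfl⟩ := hx
      exact hmaps W hW
    · rw [Finset.card_image_of_injective _ hinj]
  have ht : t ∈ Finset.image F (Finset.range (2 ^ t)) := by
    rw [himg, Finset.mem_range]
    exact Nat.lt_two_pow_self
  rw [Finset.mem_image] at ht
  obtain ⟨W, _, hW⟩ := ht
  exact ⟨W, hW⟩

private lemma mex_eq {S : Set ℕ} {g : ℕ} (h1 : g ∉ S) (h2 : ∀ u, u < g → u ∈ S) :
    mex S = g := by
  unfold mex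
  apply le_antisymm
  · exact Nat.sInf_le h1
  · apply le_csInf ⟨g, h1⟩
    intro m hm
    by_contra hc
    push_neg at hc
    exact hm (h2 m hc)

private lemma grundy_eq (f : ℕ → ℕ) (y z : ℕ) :
    grundy f y z = mex ({x | ∃ v, ∃ _ : v < y, x = grundy f v z} ∪
       {x | ∃ w, ∃ _ : w < z, x = grundy f (min y (f w)) w}) := by
  rw [grundy]

private lemma grundy_y0 (f : ℕ → ℕ) : ∀ y, grundy f y 0 = y := by
  intro y
  induction y using Nat.strong_induction_on with
  | _ y IH =>
    rw [grundy_eq]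
    apply mex_eq
    · rintro (⟨v, hv, hx⟩ | ⟨w, hw, _⟩)
      · rw [IH v hv] at hx
        omega
      · omega
    · intro u hu
      exact Or.inl ⟨u, hu, (IH u hu).symm⟩

private lemma forward {k s v m : ℕ} (hk : 1 ≤ k) (hm1 : 1 ≤ m) (hm2 : m ≤ 2 * k - 1)
    (hsmv : s = m * 2 ^ v) :
    ∀ z y, 2 * k * y ≤ z + s →
      grundy (fun t => (t + s) / (2 * k)) y z = (y ^^^ (z + s)) - s := by
  have hs1 : 1 ≤ s := by
    rw [hsmv]
    exact Nat.one_le_iff_ne_zero.mpr (Nat.mul_ne_zero (by omega)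
      (Nat.pos_iff_ne_zero.mp (Nat.pow_pos (n := v) (by omega))))
  intro z
  induction z using Nat.strong_induction_on with
  | _ z IHz =>
    intro y
    induction y using Nat.strong_induction_on with
    | _ y IHy =>
      intro hreg
      set f : ℕ → ℕ := fun t => (t + s) / (2 * k) with hf
      set Z := z + s with hZ
      have hsZ : s ≤ Z := by omega
      have hc : s ≤ y ^^^ Z := ge_s hk hm1 hm2 hsmv hsZ hreg
      rw [grundy_eq]
      apply mex_eq
      · -- the claimed value is not among the option values
        rintro (⟨v', hv, hx⟩ | ⟨w, hw, hx⟩)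
        · -- type 1 option
          have hvreg : 2 * k * v' ≤ Z := by
            have : 2 * k * v' ≤ 2 * k * y := Nat.mul_le_mul_left _ (Nat.le_of_lt hv)
            omega
          rw [IHy v' hv hvreg] at hx
          have hcv : s ≤ v' ^^^ Z := ge_s hk hm1 hm2 hsmv hsZ hvreg
          have hxe : v' ^^^ Z = y ^^^ Z := by omega
          have : v' = y := by
            have h2 := congrArg (fun x => x ^^^ Z) hxe
            simpa [Nat.xor_assoc] using h2
          omega
        · -- type 2 option
          set W := w + s with hW
          have hWZ : W < Z := by omega
          set y' := min y (f w) with hy'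
          have hfw : f w = W / (2 * k) := by rw [hf]
          have hy'le : 2 * k * y' ≤ W := by
            have h1 : y' ≤ W / (2 * k) := by
              rw [hy', hfw]
              exact min_le_right _ _
            calc 2 * k * y' = y' * (2 * k) := by ring
            _ ≤ W := (Nat.le_div_iff_mul_le (by omega)).mp h1
          rw [IHz w hw y' hy'le] at hx
          rw [← hW] at hx
          have hcy' : s ≤ y' ^^^ W := ge_s hk hm1 hm2 hsmv (by omega) hy'le
          have hxe : y' ^^^ W = y ^^^ Z := by omega
          rcases Nat.le_total y (f w) with hmin | hmin
          · have : y' = y := min_eq_left hmin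
            rw [this] at hxe
            have : W = Z := by
              have h2 := congrArg (fun x => y ^^^ x) hxe
              simpa [← Nat.xor_assoc] using h2
            omega
          · have hy'q : y' = f w := min_eq_right hmin
            have hfwy : f w < y := by
              rcases Nat.lt_or_ge (f w) y with h | h
              · exact h
              · have : y' = y := by omega
                rw [this] at hxe
                have : W = Z := by
                  have h2 := congrArg (fun x => y ^^^ x) hxe
                  simpa [← Nat.xor_assoc] using h2
                omega
            apply dist hk Z y (f w) W hreg
            · rw [hfw]
              calc 2 * k * (W / (2 * k)) = W / (2 * k) * (2 * k) := by ring
              _ ≤ W := Nat.div_mul_le_self _ _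
            · rw [hfw]
              have := Nat.div_add_mod W (2 * k)
              have : W % (2 * k) < 2 * k := Nat.mod_lt _ (by omega)
              omega
            · exact hfwy
            · exact hWZ
            · rw [← hy'q]; exact hxe
      · -- every smaller value is attained
        intro u hu
        set t := u + s with ht
        have ht1 : s ≤ t := by omega
        have ht2 : t < y ^^^ Z := by omega
        obtain ⟨b, htb, hcb, hhigh⟩ := exists_topdiff ht2
        cases hyb : y.testBit b with
        | true =>
          -- type 1 move
          have hZb : Z.testBit b = false := by
            have := hcb
            rw [Nat.testBit_xor, hyb] at this
            cases h : Z.testBit b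
            · rfl
            · rw [h] at this; simp at this
          set v' := t ^^^ Z with hv'
          have hv'Z : v' ^^^ Z = t := by
            rw [hv', Nat.xor_assoc, Nat.xor_self, Nat.xor_zero]
          have hv'y : v' < y := by
            apply Nat.lt_of_testBit b
            · rw [hv', Nat.testBit_xor, htb, hZb]; rfl
            · exact hyb
            · intro j hj
              rw [hv', Nat.testBit_xor, hhigh j hj]
              have := congrArg (fun (x : ℕ) => x.testBit j) (rfl : y ^^^ Z = y ^^^ Z)
              rw [Nat.testBit_xor]
              cases h1 : y.testBit j <;> cases h2 : Z.testBit j <;>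
                simp [Nat.testBit_xor, h1, h2]
          have hv'reg : 2 * k * v' ≤ Z := by
            have : 2 * k * v' ≤ 2 * k * y := Nat.mul_le_mul_left _ (Nat.le_of_lt hv'y)
            omega
          refine Or.inl ⟨v', hv'y, ?_⟩
          rw [IHy v' hv'y hv'reg, hv'Z]
          omega
        | false =>
          have hZb : Z.testBit b = true := by
            have := hcb
            rw [Nat.testBit_xor, hyb] at this
            cases h : Z.testBit b
            · rw [h] at this; simp at this
            · rfl
          by_cases hunc : 2 * k * y ≤ t ^^^ y
          · -- uncapped type 2 move
            set W1 := t ^^^ y with hW1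
            have hW1t : y ^^^ W1 = t := by
              rw [hW1, Nat.xor_comm t y, ← Nat.xor_assoc, Nat.xor_self, Nat.zero_xor]
            have hW1s : s ≤ W1 := by
              by_contra hcon
              push_neg at hcon
              have := lt_s hk hm1 hm2 hsmv (a := y) (W := W1) hunc hcon
              rw [hW1t] at this
              omega
            have hW1Z : W1 < Z := by
              apply Nat.lt_of_testBit b
              · rw [hW1, Nat.testBit_xor, htb, hyb]; rfl
              · exact hZb
              · intro j hj
                rw [hW1, Nat.testBit_xor, hhigh j hj]
                have hcj := congrArg (fun (x : ℕ) => x.testBit j) (rfl : y ^^^ Z = y ^^^ Z)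
                cases h1 : y.testBit j <;> cases h2 : Z.testBit j <;>
                  simp [Nat.testBit_xor, h1, h2]
            set w := W1 - s with hw
            have hwz : w < z := by omega
            have hws : w + s = W1 := by omega
            have hfww : f w = W1 / (2 * k) := by rw [hf]; simp only [hws]
            have hmin : min y (f w) = y := by
              apply min_eq_left
              rw [hfww]
              rw [Nat.le_div_iff_mul_le (by omega : 0 < 2 * k)]
              calc y * (2 * k) = 2 * k * y := by ring
              _ ≤ W1 := hunc
            refine Or.inr ⟨w, hwz, ?_⟩
            rw [IHz w hwz (min y (f w)) (by rw [hmin, hws]; exact hunc)]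
            rw [hmin, hws, hW1t]
            omega
          · -- capped type 2 move
            push_neg at hunc
            obtain ⟨W, hWt⟩ := psi_surj hk t
            set q := W / (2 * k) with hq
            have hqW : 2 * k * q ≤ W := by
              calc 2 * k * q = q * (2 * k) := by ring
              _ ≤ W := by rw [hq]; exact Nat.div_mul_le_self _ _
            have hWq2 : W < 2 * k * q + 2 * k := by
              rw [hq]
              have h1 := Nat.div_add_mod W (2 * k)
              have h2 : W % (2 * k) < 2 * k := Nat.mod_lt _ (by omega)
              omega
            have hqy : q < y := by
              by_contra hcon
              push_neg at hcon
              have hch := chain hk t y hunc q hcon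
              have hWe : W = t ^^^ q := by
                have h2 := congrArg (fun x => q ^^^ x) hWt
                simp only [← Nat.xor_assoc, Nat.xor_self, Nat.zero_xor] at h2
                rw [Nat.xor_comm t q]
                exact h2
              rw [← hWe] at hch
              omega
            have hWs : s ≤ W := by
              by_contra hcon
              push_neg at hcon
              have := lt_s hk hm1 hm2 hsmv (a := q) (W := W) hqW hcon
              rw [hWt] at this
              omega
            have hWZ : W < Z := by
              calc W < 2 * k * q + 2 * k := hWq2
              _ = 2 * k * (q + 1) := by ring
              _ ≤ 2 * k * y := Nat.mul_le_mul_left _ (by omega)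
              _ ≤ Z := hreg
            set w := W - s with hw
            have hwz : w < z := by omega
            have hws : w + s = W := by omega
            have hfww : f w = q := by rw [hf]; simp only [hws, hq]
            have hmin : min y (f w) = q := by
              rw [hfww]
              exact min_eq_right (Nat.le_of_lt hqy)
            refine Or.inr ⟨w, hwz, ?_⟩
            rw [IHz w hwz (min y (f w)) (by rw [hmin, hws]; exact hqW)]
            rw [hmin, hws, hWt]
            omega

theorem stmt_19 (k s : ℕ) (hk : 1 ≤ k) (hs : 1 ≤ s) :
    (∃ v m : ℕ, 1 ≤ m ∧ m ≤ 2 * k - 1 ∧ s = m * 2 ^ v) ↔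
    (∀ y z : ℕ, y ≤ (z + s) / (2 * k) →
      grundy (fun t => (t + s) / (2 * k)) y z = (y ^^^ (z + s)) - s) := by
  constructor
  · rintro ⟨v, m, hm1, hm2, hsmv⟩
    intro y z hy
    apply forward hk hm1 hm2 hsmv
    calc 2 * k * y = y * (2 * k) := by ring
    _ ≤ z + s := (Nat.le_div_iff_mul_le (by omega)).mp hy
  · intro hall
    by_contra hne
    obtain ⟨e, o, ho, hso⟩ := Nat.exists_eq_two_pow_mul_odd (n := s) (by omega)
    obtain ⟨j, hj⟩ := ho
    have hpe : (0:ℕ) < 2 ^ e := Nat.pow_pos (n := e) (by omega)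
    have hole : ¬ o ≤ 2 * k - 1 := by
      intro hle
      exact hne ⟨e, o, by omega, hle, by rw [hso]; ring⟩
    push_neg at hole
    have ho2k : 2 * k ≤ o := by omega
    have hreg : 2 ^ e ≤ (0 + s) / (2 * k) := by
      rw [Nat.le_div_iff_mul_le (by omega)]
      calc 2 ^ e * (2 * k) ≤ 2 ^ e * o := Nat.mul_le_mul_left _ ho2k
      _ = 0 + s := by rw [hso]; ring
    have hform := hall (2 ^ e) 0 hreg
    rw [grundy_y0] at hform
    have hxor : 2 ^ e ^^^ (0 + s) = 2 ^ e * (o - 1) := by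
      have h1 : (0 : ℕ) + s = 2 ^ e * o := by omega
      have h4 : 2 ^ e ^^^ 2 ^ e * o = 2 ^ e * 1 ^^^ 2 ^ e * o := by rw [Nat.mul_one]
      rw [h1, h4, xor_mul_pow]
      congr 1
      have : (1:ℕ) ^^^ o = o - 1 := by
        rw [Nat.xor_comm]
        have hodd : o % 2 = 1 := by omega
        have := even_xor_one (q := o - 1) (by omega)
        have h3 : o - 1 + 1 = o := by omega
        rw [h3] at this
        conv_lhs => rw [← this]
        rw [Nat.xor_assoc, Nat.xor_self, Nat.xor_zero]
      exact this
    rw [hxor] at hform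
    have hle : 2 ^ e * (o - 1) ≤ s := by
      rw [hso]
      exact Nat.mul_le_mul_left _ (by omega)
    have : 2 ^ e * (o - 1) - s = 0 := by omega
    rw [this] at hform
    omega
end
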